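/- Let S be a projective-free ring (every finitely generated projective S-module is free of unique rank) and let e₁, …, e_m ∈ M_n(S) be a complete set of orthogonal idempotents (pairwise orthogonal idempotent matrices summing to the identity). Then there exists an inner automorphism ψ of M_n(S) such that each ψ(e_i) is a diagonal 0-1 matrix; more precisely, ψ(e_i) is the block diagonal matrix with an identity block I_{r_i} in the i-th diagonal block position and zeros elsewhere, where r_i is the rank of the free module e_i·Sⁿ, and r₁ + … + r_m = n. -/

import Mathlib

set_option maxHeartbeats 1000000
set_option synthInstance.maxHeartbeats 400000

universe u

open Finset

section Stmt7Aux

open Matrix MulOpposite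

variable {S : Type u} [Ring S]

/-- Multiplication by a matrix as a linear map of right `S`-modules (i.e. `Sᵐᵒᵖ`-modules). -/
def mulVecLinOp {k n : ℕ} (M : Matrix (Fin n) (Fin k) S) : (Fin k → S) →ₗ[Sᵐᵒᵖ] (Fin n → S) where
  toFun v := M.mulVec v
  map_add' u v := Matrix.mulVec_add M u v
  map_smul' c v := by
    ext j
    simp [Matrix.mulVec, dotProduct, Finset.sum_mul, mul_assoc,
      MulOpposite.smul_eq_mul_unop]

/-- `(Fin k → S)` is isomorphic to `(Fin k → Sᵐᵒᵖ)` as an `Sᵐᵒᵖ`-module. -/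
def piOpEquiv (k : ℕ) : (Fin k → S) ≃ₗ[Sᵐᵒᵖ] (Fin k → Sᵐᵒᵖ) where
  toFun v j := op (v j)
  invFun w j := unop (w j)
  map_add' u v := by ext j; simp
  map_smul' c v := by ext j; simp [MulOpposite.smul_eq_mul_unop]
  left_inv v := by ext j; simp
  right_inv w := by ext j; simp

instance (k : ℕ) : Module.Finite Sᵐᵒᵖ (Fin k → S) :=
  Module.Finite.equiv (piOpEquiv k).symm

instance (k : ℕ) : Module.Free Sᵐᵒᵖ (Fin k → S) :=
  Module.Free.of_equiv (piOpEquiv k).symm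

/-- Over a projective-free ring, every idempotent matrix splits as `X * Y` with `Y * X = 1`. -/
theorem idem_split {n : ℕ}
    (hprojfree : ∀ (P : Type u) [AddCommGroup P] [Module Sᵐᵒᵖ P],
      Module.Finite Sᵐᵒᵖ P → Module.Projective Sᵐᵒᵖ P → Module.Free Sᵐᵒᵖ P)
    (e : Matrix (Fin n) (Fin n) S) (he : e * e = e) :
    ∃ (r : ℕ) (X : Matrix (Fin n) (Fin r) S) (Y : Matrix (Fin r) (Fin n) S),
      X * Y = e ∧ Y * X = 1 := by
  set π : (Fin n → S) →ₗ[Sᵐᵒᵖ] (Fin n → S) := mulVecLinOp e with hπ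
  set P := LinearMap.range π with hP
  have hfix : ∀ v : Fin n → S, v ∈ P → e.mulVec v = v := by
    rintro v ⟨u, rfl⟩
    show e.mulVec (e.mulVec u) = e.mulVec u
    rw [Matrix.mulVec_mulVec, he]
  have hfin : Module.Finite Sᵐᵒᵖ P := Module.Finite.range π
  have hproj : Module.Projective Sᵐᵒᵖ P := by
    refine Module.Projective.of_split (M := Fin n → S) P.subtype (π.codRestrict P ?_) ?_
    · intro v; exact LinearMap.mem_range_self π v
    · refine LinearMap.ext fun v => Subtype.ext ?_
      exact hfix v.1 v.2
  have hfree : Module.Free Sᵐᵒᵖ P := hprojfree P hfin hproj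
  set ι := Module.Free.ChooseBasisIndex Sᵐᵒᵖ P
  have : Fintype ι := inferInstance
  set r := Fintype.card ι with hr
  set b : Module.Basis (Fin r) Sᵐᵒᵖ P := (Module.Free.chooseBasis Sᵐᵒᵖ P).reindex (Fintype.equivFin ι)
  have hcolmem : ∀ k : Fin n, (fun j => e j k) ∈ P := by
    intro k
    refine ⟨Pi.single k 1, ?_⟩
    show e.mulVec (Pi.single k 1) = _
    ext j
    simp [Matrix.mulVec_single]
  set col : Fin n → P := fun k => ⟨fun j => e j k, hcolmem k⟩ with hcol
  set X : Matrix (Fin n) (Fin r) S := Matrix.of fun j t => (b t : Fin n → S) j with hX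
  set Y : Matrix (Fin r) (Fin n) S := Matrix.of fun t k => unop (b.repr (col k) t) with hY
  refine ⟨r, X, Y, ?_, ?_⟩
  · ext j k
    have hs := congrArg (fun v : P => (v : Fin n → S) j) (b.sum_repr (col k))
    simp only [AddSubmonoidClass.coe_finset_sum, Finset.sum_apply] at hs
    have h1 : ∀ t : Fin r, ((b.repr (col k) t • b t : P) : Fin n → S) j
        = (b t : Fin n → S) j * unop (b.repr (col k) t) := by
      intro t
      rw [Submodule.coe_smul, Pi.smul_apply, MulOpposite.smul_eq_mul_unop]
    simp only [h1] at hs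
    have h2 : (X * Y) j k = ∑ t, (b t : Fin n → S) j * unop (b.repr (col k) t) := by
      simp [Matrix.mul_apply, hX, hY]
    rw [h2, hs]
  · ext t t'
    have hkey : (∑ k, op ((b t' : Fin n → S) k) • col k) = b t' := by
      refine Subtype.ext ?_
      rw [AddSubmonoidClass.coe_finset_sum]
      ext j
      rw [Finset.sum_apply]
      have h1 : ∀ k : Fin n, ((op ((b t' : Fin n → S) k) • col k : P) : Fin n → S) j
          = e j k * (b t' : Fin n → S) k := by
        intro k
        rw [Submodule.coe_smul, Pi.smul_apply, MulOpposite.smul_eq_mul_unop]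
        simp [hcol]
      simp only [h1]
      have h2 : ∑ k, e j k * (b t' : Fin n → S) k = (e.mulVec (b t' : Fin n → S)) j := by
        simp [Matrix.mulVec, dotProduct]
      rw [h2, hfix _ (b t').2]
    have h3 : (b.repr (b t')) t = ∑ k, op ((b t' : Fin n → S) k) • ((b.repr (col k)) t) := by
      conv_lhs => rw [← hkey]
      rw [map_sum, Finsupp.finset_sum_apply]
      refine Finset.sum_congr rfl fun k _ => ?_
      rw [_root_.map_smul, Finsupp.smul_apply]
    have h4 : (Y * X) t t' = ∑ k, unop (b.repr (col k) t) * (b t' : Fin n → S) k := by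
      simp [Matrix.mul_apply, hX, hY]
    have h5 : (Y * X) t t' = unop ((b.repr (b t')) t) := by
      rw [h4, h3, Finset.unop_sum]
      refine Finset.sum_congr rfl fun k _ => ?_
      rw [smul_eq_mul, unop_mul, unop_op]
    rw [h5, b.repr_self, Finsupp.single_apply, Matrix.one_apply]
    rcases eq_or_ne t t' with h | h
    · subst h; simp
    · simp [h, Ne.symm h]

section blocks

variable {m : ℕ} (r : Fin m → ℕ)

/-- The offset of the `i`-th block. -/
def off (i : Fin m) : ℕ := ∑ l ∈ Finset.univ.filter (fun l => l < i), r l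

theorem off' (i : Fin m) :
    ∑ l ∈ Finset.univ.filter (fun l => l ≤ i), r l = off r i + r i := by
  have h : Finset.univ.filter (fun l => l ≤ i)
      = insert i (Finset.univ.filter (fun l => l < i)) := by
    ext l
    simp [le_iff_lt_or_eq, or_comm]
  rw [h, Finset.sum_insert (by simp), off, add_comm]

theorem off_mono {i j : Fin m} (h : i < j) : off r i + r i ≤ off r j := by
  rw [← off' r i]
  exact Finset.sum_le_sum_of_subset (by intro l hl; simp at hl ⊢; omega)

theorem off_le (i : Fin m) : off r i + r i ≤ ∑ l, r l := by
  rw [← off' r i]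
  exact Finset.sum_le_sum_of_subset (Finset.filter_subset _ _)

/-- The order-respecting identification of `Σ i, Fin (r i)` with `Fin (Σ i, r i)`. -/
def blockFun (p : (i : Fin m) × Fin (r i)) : Fin (∑ l, r l) :=
  ⟨off r p.1 + p.2, lt_of_lt_of_le (by have := p.2.isLt; omega) (off_le r p.1)⟩

theorem blockFun_bijective : Function.Bijective (blockFun r) := by
  rw [Fintype.bijective_iff_injective_and_card]
  constructor
  · rintro ⟨j, t⟩ ⟨j', t'⟩ h
    simp only [blockFun, Fin.mk.injEq] at h
    have ht := t.isLt
    have ht' := t'.isLt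
    rcases lt_trichotomy j j' with hj | hj | hj
    · have := off_mono r hj; omega
    · subst hj
      have : t = t' := Fin.ext (by omega)
      rw [this]
    · have := off_mono r hj; omega
  · simp

end blocks

end Stmt7Aux

open Matrix MulOpposite in
/-- Let `S` be a projective-free ring (every finitely generated projective right
`S`-module is free, and free modules have unique rank), and let `e 1, …, e m` be a complete set of
orthogonal idempotents in `Mₙ(S)`. Then there are ranks `r i` with `Σ r i = n`, the column module
of each `e i` is free of rank `r i` (witnessed by matrices `X`, `Y`), and an inner automorphism
(conjugation by a unit `U`) taking each `e i` to the 0-1 diagonal matrix whose identity block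
`I_{r i}` sits in the `i`-th diagonal block position. -/
theorem stmt7 {S : Type u} [Ring S] {n m : ℕ}
    (hprojfree : ∀ (P : Type u) [AddCommGroup P] [Module Sᵐᵒᵖ P],
      Module.Finite Sᵐᵒᵖ P → Module.Projective Sᵐᵒᵖ P → Module.Free Sᵐᵒᵖ P)
    (huniquerank : ∀ a b : ℕ, Nonempty ((Fin a → S) ≃ₗ[Sᵐᵒᵖ] (Fin b → S)) → a = b)
    (e : Fin m → Matrix (Fin n) (Fin n) S)
    (hidem : ∀ i, e i * e i = e i)
    (horth : ∀ i j, i ≠ j → e i * e j = 0)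
    (hsum : ∑ i, e i = 1) :
    ∃ (r : Fin m → ℕ) (U : (Matrix (Fin n) (Fin n) S)ˣ),
      (∑ i, r i = n) ∧
      (∀ i, ∃ (X : Matrix (Fin n) (Fin (r i)) S) (Y : Matrix (Fin (r i)) (Fin n) S),
        X * Y = e i ∧ Y * X = 1) ∧
      (∀ i, ((U⁻¹).val * e i * U.val) =
        Matrix.of fun (j k : Fin n) =>
          if j = k ∧ (∑ l ∈ Finset.univ.filter (fun l => l < i), r l) ≤ (j : ℕ) ∧
              (j : ℕ) < ∑ l ∈ Finset.univ.filter (fun l => l ≤ i), r l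
          then 1 else 0) := by
  choose r X Y hXY hYX using fun i => idem_split hprojfree (e i) (hidem i)
  have hYe : ∀ i, Y i * e i = Y i := fun i => by
    rw [← hXY i, ← Matrix.mul_assoc, hYX i, Matrix.one_mul]
  have heX : ∀ i, e i * X i = X i := fun i => by
    rw [← hXY i, Matrix.mul_assoc, hYX i, Matrix.mul_one]
  set A : Matrix (Fin n) ((i : Fin m) × Fin (r i)) S := Matrix.of fun j p => X p.1 j p.2 with hA
  set B : Matrix ((i : Fin m) × Fin (r i)) (Fin n) S := Matrix.of fun p j => Y p.1 p.2 j with hB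
  have hAB : A * B = 1 := by
    ext j k
    rw [Matrix.mul_apply, ← Finset.univ_sigma_univ, Finset.sum_sigma]
    have h1 : ∀ i : Fin m, ∑ t : Fin (r i), A j ⟨i, t⟩ * B ⟨i, t⟩ k = e i j k := by
      intro i
      rw [← hXY i, Matrix.mul_apply]
      rfl
    rw [Finset.sum_congr rfl fun i _ => h1 i]
    have h2 : (∑ i, e i) j k = (1 : Matrix (Fin n) (Fin n) S) j k := by rw [hsum]
    simpa only [Matrix.sum_apply] using h2
  have hBA : B * A = 1 := by
    ext p q
    obtain ⟨j, t⟩ := p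
    obtain ⟨j', t'⟩ := q
    have h1 : (B * A) ⟨j, t⟩ ⟨j', t'⟩ = (Y j * X j') t t' := by
      rw [Matrix.mul_apply, Matrix.mul_apply]
      rfl
    rw [h1]
    by_cases hj : j = j'
    · subst hj
      rw [hYX j, Matrix.one_apply]
      rcases eq_or_ne t t' with ht | ht
      · subst ht
        simp
      · rw [if_neg ht, Matrix.one_apply_ne (by simp [ht])]
    · have h0 : Y j * X j' = 0 := by
        rw [← hYe j, ← heX j', Matrix.mul_assoc (Y j), ← Matrix.mul_assoc (e j),
          horth j j' hj, Matrix.zero_mul, Matrix.mul_zero]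
      rw [h0, Matrix.one_apply_ne (by simp [hj]), Matrix.zero_apply]
  -- the ordered identification of blocks with `Fin (∑ i, r i)`
  set N := ∑ i, r i with hNdef
  set σ : ((i : Fin m) × Fin (r i)) ≃ Fin N :=
    Equiv.ofBijective (blockFun r) (blockFun_bijective r) with hσ
  -- rank computation: `N = n`
  have hN : N = n := by
    refine huniquerank N n ⟨?_⟩
    set A' : Matrix (Fin n) (Fin N) S := A.submatrix id (⇑σ.symm) with hA'
    set B' : Matrix (Fin N) (Fin n) S := B.submatrix (⇑σ.symm) id with hB'
    have hA'B' : A' * B' = 1 := by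
      rw [hA', hB', Matrix.submatrix_mul_equiv, hAB, Matrix.submatrix_id_id]
    have hB'A' : B' * A' = 1 := by
      have h : (B.submatrix (⇑σ.symm) id) * (A.submatrix id (⇑σ.symm))
          = (B * A).submatrix (⇑σ.symm) (⇑σ.symm) := by
        have h2 := Matrix.submatrix_mul_equiv B A (⇑σ.symm) (Equiv.refl (Fin n)) (⇑σ.symm)
        simpa using h2
      rw [hB', hA', h, hBA, Matrix.submatrix_one_equiv]
    refine LinearEquiv.ofLinear (mulVecLinOp A') (mulVecLinOp B') ?_ ?_
    · refine LinearMap.ext fun v => ?_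
      show A'.mulVec (B'.mulVec v) = v
      rw [Matrix.mulVec_mulVec, hA'B', Matrix.one_mulVec]
    · refine LinearMap.ext fun v => ?_
      show B'.mulVec (A'.mulVec v) = v
      rw [Matrix.mulVec_mulVec, hB'A', Matrix.one_mulVec]
  set σ' : Fin n ≃ ((i : Fin m) × Fin (r i)) := (finCongr hN.symm).trans σ.symm with hσ'
  set U0 : Matrix (Fin n) (Fin n) S := A.submatrix id (⇑σ') with hU0
  set V0 : Matrix (Fin n) (Fin n) S := B.submatrix (⇑σ') id with hV0
  have hUV : U0 * V0 = 1 := by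
    rw [hU0, hV0, Matrix.submatrix_mul_equiv, hAB, Matrix.submatrix_id_id]
  have hVU : V0 * U0 = 1 := by
    have h : (B.submatrix (⇑σ') id) * (A.submatrix id (⇑σ'))
        = (B * A).submatrix (⇑σ') (⇑σ') := by
      have h2 := Matrix.submatrix_mul_equiv B A (⇑σ') (Equiv.refl (Fin n)) (⇑σ')
      simpa using h2
    rw [hV0, hU0, h, hBA, Matrix.submatrix_one_equiv]
  refine ⟨r, ⟨U0, V0, hUV, hVU⟩, hN, fun i => ⟨X i, Y i, hXY i, hYX i⟩, fun i => ?_⟩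
  show V0 * e i * U0 = _
  have hsub : V0 * e i * U0 = (B * e i * A).submatrix (⇑σ') (⇑σ') := by
    have h1 : V0 * e i = (B * e i).submatrix (⇑σ') id := by
      have h2 := Matrix.submatrix_mul_equiv B (e i) (⇑σ') (Equiv.refl (Fin n)) id
      simpa using h2
    have h3 : (B * e i).submatrix (⇑σ') id * U0 = (B * e i * A).submatrix (⇑σ') (⇑σ') := by
      exact Matrix.submatrix_mul_equiv (B * e i) A (⇑σ') (Equiv.refl (Fin n)) (⇑σ')
    rw [h1, hU0, ← h3]
  have hblock : ∀ p q : ((i : Fin m) × Fin (r i)),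
      (B * e i * A) p q = (Y p.1 * e i * X q.1) p.2 q.2 := by
    intro p q
    simp only [Matrix.mul_apply, hA, hB, Matrix.of_apply]
  -- the value of `σ'.symm`
  have hval : ∀ p : ((i : Fin m) × Fin (r i)), ((σ'.symm p : Fin n) : ℕ) = off r p.1 + p.2 :=
    fun p => rfl
  rw [hsub]
  ext a c
  rw [Matrix.submatrix_apply, hblock]
  rcases hpa : σ' a with ⟨j, t⟩
  rcases hpc : σ' c with ⟨j', t'⟩
  have hav : (a : ℕ) = off r j + t := by
    have h : a = σ'.symm ⟨j, t⟩ := by rw [← hpa, Equiv.symm_apply_apply]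
    rw [h, hval]
  have hcv : (c : ℕ) = off r j' + t' := by
    have h : c = σ'.symm ⟨j', t'⟩ := by rw [← hpc, Equiv.symm_apply_apply]
    rw [h, hval]
  have ht := t.isLt
  have ht' := t'.isLt
  dsimp only
  simp only [Matrix.of_apply]
  rw [off' r i, show (∑ l ∈ Finset.univ.filter (fun l => l < i), r l) = off r i from rfl]
  by_cases hji : j = i
  · subst hji
    by_cases hji' : j' = j
    · subst hji'
      rw [hYe j', hYX j']
      have hb1 : off r j' ≤ (a : ℕ) := by omega
      have hb2 : (a : ℕ) < off r j' + r j' := by omega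
      have hac : a = c ↔ t = t' := by
        constructor
        · intro h
          subst h
          rw [hpa] at hpc
          exact eq_of_heq (Sigma.mk.inj_iff.mp hpc).2
        · intro h
          subst h
          apply σ'.injective
          rw [hpa, hpc]
      rw [Matrix.one_apply]
      simp only [hb1, hb2, and_true]
      rcases eq_or_ne t t' with h | h
      · simp [h, hac.mpr h]
      · have hnac : ¬ a = c := fun hh => h (hac.mp hh)
        simp [h, hnac]
    · have h0 : Y j * e j * X j' = 0 := by
        rw [hYe j, ← heX j', ← hYe j, Matrix.mul_assoc (Y j), ← Matrix.mul_assoc (e j),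
          horth j j' (fun h => hji' h.symm), Matrix.zero_mul, Matrix.mul_zero]
      have hnac : ¬ a = c := by
        intro h
        subst h
        rw [hpa] at hpc
        exact hji' (congrArg Sigma.fst hpc).symm
      rw [h0, Matrix.zero_apply, if_neg (by tauto)]
  · have h0 : Y j * e i * X j' = 0 := by
      conv_lhs => rw [← hYe j]
      rw [Matrix.mul_assoc (Y j), horth j i hji, Matrix.mul_zero, Matrix.zero_mul]
    have hnb : ¬ (off r i ≤ (a : ℕ) ∧ (a : ℕ) < off r i + r i) := by
      rintro ⟨h1, h2⟩
      rcases lt_trichotomy j i with h | h | h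
      · have := off_mono r h; omega
      · exact hji h
      · have := off_mono r h; omega
    rw [h0, Matrix.zero_apply, if_neg (by tauto)]
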